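/- Let L be the (lower-triangular) Cholesky factor of a symmetric positive definite matrix V ∈ ℝ^{m×m} (V = L Lᵀ), let e ∈ ℝ^m be a random vector with E(e) = 0 and Var(e) = V, and let Π = diag(s₁,…,s_m) with i.i.d. Rademacher signs independent of e. Then the vector e* = L Π L⁻¹ e satisfies E(e*) = 0 and Var(e*) = V. -/

import Mathlib

open MeasureTheory ProbabilityTheory Matrix

/-- If `V = L Lᵀ` is the Cholesky decomposition of a symmetric positive definite `V`,
`e` is a random vector with mean `0` and covariance `V`, and `Π = diag(s₁,…,s_m)` with
i.i.d. Rademacher signs independent of `e`, then `e* = L Π L⁻¹ e` has mean `0` and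
covariance `V`. -/
theorem stmt17 {m : ℕ} {Ω : Type*} [MeasureSpace Ω] (μ : Measure Ω) [IsProbabilityMeasure μ]
    (V L : Matrix (Fin m) (Fin m) ℝ) (hVpd : V.PosDef)
    (hLtri : ∀ i j : Fin m, i < j → L i j = 0) (hLV : V = L * Lᵀ)
    (hLunit : IsUnit L.det)
    (e : Ω → Fin m → ℝ) (hemeas : Measurable e)
    (heint : ∀ i j, Integrable (fun ω => e ω i * e ω j) μ)
    (hemean : ∀ i, ∫ ω, e ω i ∂μ = 0)
    (hecov : ∀ i j, ∫ ω, e ω i * e ω j ∂μ = V i j)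
    (s : Fin m → Ω → ℝ) (hsmeas : ∀ i, Measurable (s i))
    (hsindep : iIndepFun s μ)
    (hplus : ∀ i, μ {ω | s i ω = 1} = 1 / 2)
    (hminus : ∀ i, μ {ω | s i ω = -1} = 1 / 2)
    (hse : IndepFun (fun ω i => s i ω) e μ)
    (estar : Ω → Fin m → ℝ)
    (hestar : ∀ ω, estar ω = L.mulVec (fun i => s i ω * (L⁻¹.mulVec (e ω)) i)) :
    (∀ i, ∫ ω, estar ω i ∂μ = 0) ∧
    (∀ i j, ∫ ω, estar ω i * estar ω j ∂μ = V i j) := by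
  set B := L⁻¹ with hB
  set f : Fin m → Ω → ℝ := fun k ω => B.mulVec (e ω) k with hfdef
  have hfeq : ∀ k ω, f k ω = ∑ a, B k a * e ω a := by
    intro k ω; simp [hfdef, Matrix.mulVec, dotProduct]
  -- integrability of e components
  have he1 : ∀ i, Integrable (fun ω => e ω i) μ := by
    intro i
    refine Integrable.mono' (((heint i i).add (integrable_const 1)).div_const 2)
      ((measurable_pi_apply i).comp hemeas).aestronglyMeasurable ?_
    filter_upwards with ω
    simp only [Pi.add_apply, Real.norm_eq_abs]
    nlinarith [sq_nonneg (|e ω i| - 1), sq_abs (e ω i)]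
  -- properties of f
  have hfmeas : ∀ k, Measurable (f k) := by
    intro k
    rw [show f k = fun ω => ∑ a, B k a * e ω a from funext (hfeq k)]
    exact Finset.measurable_sum _ fun a _ =>
      measurable_const.mul ((measurable_pi_apply a).comp hemeas)
  have hfint : ∀ k, Integrable (f k) μ := by
    intro k
    rw [show f k = fun ω => ∑ a, B k a * e ω a from funext (hfeq k)]
    exact integrable_finset_sum _ fun a _ => (he1 a).const_mul _
  have hffexp : ∀ k l, (fun ω => f k ω * f l ω)
      = fun ω => ∑ a, ∑ b, (B k a * B l b) * (e ω a * e ω b) := by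
    intro k l
    funext ω
    rw [hfeq, hfeq, Finset.sum_mul_sum]
    exact Finset.sum_congr rfl fun a _ => Finset.sum_congr rfl fun b _ => by ring
  have hffint : ∀ k l, Integrable (fun ω => f k ω * f l ω) μ := by
    intro k l
    rw [hffexp k l]
    exact integrable_finset_sum _ fun a _ =>
      integrable_finset_sum _ fun b _ => (heint a b).const_mul _
  have hBVB : B * V * Bᵀ = 1 := by
    rw [hLV, hB, Matrix.transpose_nonsing_inv, ← Matrix.mul_assoc,
      Matrix.nonsing_inv_mul L hLunit, Matrix.one_mul,
      Matrix.mul_nonsing_inv Lᵀ (by rwa [Matrix.det_transpose])]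
  have hfcov : ∀ k l, ∫ ω, f k ω * f l ω ∂μ = (1 : Matrix (Fin m) (Fin m) ℝ) k l := by
    intro k l
    rw [hffexp k l,
      integral_finset_sum _ fun a _ =>
        integrable_finset_sum _ fun b _ => (heint a b).const_mul _]
    have : ∀ a : Fin m, ∫ ω, ∑ b, (B k a * B l b) * (e ω a * e ω b) ∂μ
        = ∑ b, (B k a * B l b) * V a b := by
      intro a
      rw [integral_finset_sum _ fun b _ => (heint a b).const_mul _]
      exact Finset.sum_congr rfl fun b _ => by rw [integral_const_mul, hecov]
    rw [Finset.sum_congr rfl fun a _ => this a, ← hBVB]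
    simp only [Matrix.mul_apply, Matrix.transpose_apply, Finset.sum_mul]
    rw [Finset.sum_comm]
    exact Finset.sum_congr rfl fun b _ => Finset.sum_congr rfl fun a _ => by ring
  -- a.e. properties of the signs
  have hsae : ∀ i, ∀ᵐ ω ∂μ, s i ω = 1 ∨ s i ω = -1 := by
    intro i
    have hA : MeasurableSet {ω | s i ω = 1} := measurableSet_eq_fun (hsmeas i) measurable_const
    have hBm : MeasurableSet {ω | s i ω = -1} := measurableSet_eq_fun (hsmeas i) measurable_const
    have hdisj : Disjoint {ω | s i ω = 1} {ω | s i ω = -1} := by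
      rw [Set.disjoint_left]
      rintro ω h1 h2
      simp only [Set.mem_setOf_eq] at h1 h2
      rw [h1] at h2; norm_num at h2
    have hu : μ ({ω | s i ω = 1} ∪ {ω | s i ω = -1}) = 1 := by
      rw [measure_union hdisj hBm, hplus, hminus]
      exact ENNReal.add_halves 1
    have hc : μ ({ω | s i ω = 1} ∪ {ω | s i ω = -1})ᶜ = 0 :=
      (prob_compl_eq_zero_iff (hA.union hBm)).2 hu
    rw [ae_iff]
    refine measure_mono_null ?_ hc
    intro ω hω
    simp only [Set.mem_setOf_eq, not_or] at hω
    simp only [Set.mem_compl_iff, Set.mem_union, Set.mem_setOf_eq, not_or]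
    exact hω
  have hsbd : ∀ i, ∀ᵐ ω ∂μ, ‖s i ω‖ ≤ 1 := by
    intro i
    filter_upwards [hsae i] with ω h
    rcases h with h | h <;> simp [h]
  have hsint : ∀ i, Integrable (s i) μ := fun i =>
    Integrable.mono' (integrable_const 1) (hsmeas i).aestronglyMeasurable (hsbd i)
  have hsmean : ∀ i, ∫ ω, s i ω ∂μ = 0 := by
    intro i
    have hA : MeasurableSet {ω | s i ω = 1} := measurableSet_eq_fun (hsmeas i) measurable_const
    have hBm : MeasurableSet {ω | s i ω = -1} := measurableSet_eq_fun (hsmeas i) measurable_const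
    have heq : (fun ω => s i ω) =ᵐ[μ] fun ω =>
        Set.indicator {ω | s i ω = 1} (fun _ => (1 : ℝ)) ω
          + Set.indicator {ω | s i ω = -1} (fun _ => (-1 : ℝ)) ω := by
      filter_upwards [hsae i] with ω hω
      rcases hω with h | h <;>
        · simp only [Set.indicator_apply, Set.mem_setOf_eq, h]
          norm_num
    rw [integral_congr_ae heq,
      integral_add ((integrable_const (1 : ℝ)).indicator hA)
        ((integrable_const (-1 : ℝ)).indicator hBm),
      integral_indicator_const _ hA, integral_indicator_const _ hBm, measureReal_def, measureReal_def, hplus, hminus]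
    norm_num [ENNReal.toReal_div]
  -- independence consequences
  have hindsf : ∀ k l : Fin m,
      IndepFun (fun ω => s k ω * s l ω) (fun ω => f k ω * f l ω) μ := by
    intro k l
    have hφ : Measurable (fun v : Fin m → ℝ => v k * v l) :=
      (measurable_pi_apply k).mul (measurable_pi_apply l)
    have hψ : Measurable (fun v : Fin m → ℝ =>
        (∑ a, B k a * v a) * (∑ a, B l a * v a)) :=
      (Finset.measurable_sum _ fun a _ => measurable_const.mul (measurable_pi_apply a)).mul
        (Finset.measurable_sum _ fun a _ => measurable_const.mul (measurable_pi_apply a))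
    have h := hse.comp hφ hψ
    have h2 : ((fun v : Fin m → ℝ => (∑ a, B k a * v a) * (∑ a, B l a * v a)) ∘ e)
        = fun ω => f k ω * f l ω := funext fun ω => by
      simp only [Function.comp_apply]; rw [hfeq, hfeq]
    rwa [h2] at h
  have hindsf1 : ∀ k : Fin m, IndepFun (s k) (f k) μ := by
    intro k
    have hφ : Measurable (fun v : Fin m → ℝ => v k) := measurable_pi_apply k
    have hψ : Measurable (fun v : Fin m → ℝ => ∑ a, B k a * v a) :=
      Finset.measurable_sum _ fun a _ => measurable_const.mul (measurable_pi_apply a)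
    have h := hse.comp hφ hψ
    have h2 : ((fun v : Fin m → ℝ => ∑ a, B k a * v a) ∘ e) = f k :=
      funext fun ω => by simp only [Function.comp_apply]; rw [hfeq]
    rwa [h2] at h
  have hsfint : ∀ k, Integrable (fun ω => s k ω * f k ω) μ := fun k =>
    (hfint k).bdd_mul (hsmeas k).aestronglyMeasurable (hsbd k)
  have hmean1 : ∀ k, ∫ ω, s k ω * f k ω ∂μ = 0 := by
    intro k
    have h := (hindsf1 k).integral_fun_mul_eq_mul_integral (hsint k).aestronglyMeasurable (hfint k).aestronglyMeasurable
    rw [hsmean k, zero_mul] at h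
    exact h
  -- the key second-moment identity
  have hssbd : ∀ k l : Fin m, ∀ᵐ ω ∂μ, ‖s k ω * s l ω‖ ≤ 1 := by
    intro k l
    filter_upwards [hsae k, hsae l] with ω h1 h2
    rcases h1 with h1 | h1 <;> rcases h2 with h2 | h2 <;> simp [h1, h2]
  have hterm : ∀ k l, Integrable (fun ω => (s k ω * s l ω) * (f k ω * f l ω)) μ := fun k l =>
    (hffint k l).bdd_mul ((hsmeas k).mul (hsmeas l)).aestronglyMeasurable (hssbd k l)
  have hI : ∀ k l, ∫ ω, (s k ω * s l ω) * (f k ω * f l ω) ∂μ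
      = (1 : Matrix (Fin m) (Fin m) ℝ) k l := by
    intro k l
    by_cases hkl : k = l
    · subst hkl
      have heq : (fun ω => (s k ω * s k ω) * (f k ω * f k ω)) =ᵐ[μ]
          fun ω => f k ω * f k ω := by
        filter_upwards [hsae k] with ω h
        rcases h with h | h <;> rw [h] <;> ring
      rw [integral_congr_ae heq, hfcov k k, Matrix.one_apply_eq]
    · have hssint : Integrable (fun ω => s k ω * s l ω) μ :=
        (hsint l).bdd_mul (hsmeas k).aestronglyMeasurable (hsbd k)
      have hssmean : ∫ ω, s k ω * s l ω ∂μ = 0 := by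
        have h := (hsindep.indepFun hkl).integral_fun_mul_eq_mul_integral (hsint k).aestronglyMeasurable (hsint l).aestronglyMeasurable
        rw [hsmean k, zero_mul] at h
        exact h
      rw [Matrix.one_apply_ne hkl]
      have h := (hindsf k l).integral_fun_mul_eq_mul_integral hssint.aestronglyMeasurable (hffint k l).aestronglyMeasurable
      rw [hssmean, zero_mul] at h
      exact h
  refine ⟨?_, ?_⟩
  · intro i
    have hexp : (fun ω => estar ω i) = fun ω => ∑ k, L i k * (s k ω * f k ω) := by
      funext ω
      rw [hestar]
      rfl
    rw [hexp, integral_finset_sum _ fun k _ => (hsfint k).const_mul _]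
    simp only [integral_const_mul]
    rw [Finset.sum_congr rfl fun k _ => by rw [hmean1 k, mul_zero]]
    exact Finset.sum_const_zero
  · intro i j
    have hexp : (fun ω => estar ω i * estar ω j) = fun ω =>
        ∑ k, ∑ l, (L i k * L j l) * ((s k ω * s l ω) * (f k ω * f l ω)) := by
      funext ω
      rw [hestar]
      show (∑ k, L i k * (s k ω * f k ω)) * (∑ l, L j l * (s l ω * f l ω)) = _
      rw [Finset.sum_mul_sum]
      exact Finset.sum_congr rfl fun k _ => Finset.sum_congr rfl fun l _ => by ring
    rw [hexp, integral_finset_sum _ fun k _ =>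
      integrable_finset_sum _ fun l _ => (hterm k l).const_mul _]
    have step : ∀ k : Fin m,
        ∫ ω, ∑ l, (L i k * L j l) * ((s k ω * s l ω) * (f k ω * f l ω)) ∂μ
          = L i k * L j k := by
      intro k
      rw [integral_finset_sum _ fun l _ => (hterm k l).const_mul _]
      have : ∀ l : Fin m,
          ∫ ω, (L i k * L j l) * ((s k ω * s l ω) * (f k ω * f l ω)) ∂μ
            = (L i k * L j l) * (1 : Matrix (Fin m) (Fin m) ℝ) k l := by
        intro l
        rw [integral_const_mul, hI]
      rw [Finset.sum_congr rfl fun l _ => this l]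
      simp [Matrix.one_apply, mul_ite]
    rw [Finset.sum_congr rfl fun k _ => step k, hLV]
    simp [Matrix.mul_apply]
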